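/- The generalized translation satisfies τ_y E_μ(λx) = E_μ(λx) E_μ(λy) for λ ∈ ℂ, where τ_y f = Σ_{n≥0} (y^n/[n]_μ!) D_μ^n f. -/

import Mathlib

/-- The Dunkl operator on complex-valued functions of a real variable. -/
noncomputable def dunklC (μ : ℝ) (f : ℝ → ℂ) (x : ℝ) : ℂ :=
  deriv f x + (μ : ℂ) * (f x - f (-x)) / (x : ℂ)

/-- The deformed integer `[n]_μ = n + μ (1 - (-1)^n)`. -/
noncomputable def dIdx (μ : ℝ) (n : ℕ) : ℝ := n + μ * (1 - (-1 : ℝ) ^ n)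

/-- The deformed factorial `[n]_μ!`. -/
noncomputable def dFact (μ : ℝ) : ℕ → ℝ
  | 0 => 1
  | n + 1 => dIdx μ (n + 1) * dFact μ n

/-- The deformed exponential `E_μ(z) = Σ_{n≥0} z^n / [n]_μ!`. -/
noncomputable def Emu (μ : ℝ) (z : ℂ) : ℂ := ∑' n : ℕ, z ^ n / (dFact μ n : ℂ)

/-- The generalized translation `τ_y f = Σ_{n≥0} (y^n/[n]_μ!) D_μ^n f`. -/
noncomputable def tauC (μ : ℝ) (y : ℝ) (f : ℝ → ℂ) (x : ℝ) : ℂ :=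
  ∑' n : ℕ, ((y : ℂ) ^ n / (dFact μ n : ℂ)) * ((dunklC μ)^[n] f x)

open Nat Complex

lemma dunklC_apply (μ : ℝ) (f : ℝ → ℂ) (x : ℝ) :
    dunklC μ f x = deriv f x + (μ : ℂ) * (f x - f (-x)) / (x : ℂ) := rfl

lemma sub_neg_one_pow_nonneg (n : ℕ) : 0 ≤ 1 - (-1 : ℝ) ^ n := by
  rcases Nat.even_or_odd n with h | h
  · simp [h.neg_one_pow]
  · simp [h.neg_one_pow]

lemma dIdx_ge (μ : ℝ) (hμ : 0 ≤ μ) (n : ℕ) : (n : ℝ) ≤ dIdx μ n := by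
  have := mul_nonneg hμ (sub_neg_one_pow_nonneg n)
  unfold dIdx; linarith

lemma dFact_ge (μ : ℝ) (hμ : 0 ≤ μ) : ∀ n : ℕ, (n ! : ℝ) ≤ dFact μ n
  | 0 => by simp [dFact]
  | n + 1 => by
    have h1 := dFact_ge μ hμ n
    have h2 := dIdx_ge μ hμ (n + 1)
    have h3 : (0 : ℝ) < n ! := by exact_mod_cast Nat.factorial_pos n
    have h4 : ((n + 1)! : ℝ) = ((n : ℝ) + 1) * n ! := by
      push_cast [Nat.factorial_succ]; ring
    have h5 : dFact μ (n + 1) = dIdx μ (n + 1) * dFact μ n := rfl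
    rw [h4, h5]
    push_cast at h2
    nlinarith

lemma dFact_pos (μ : ℝ) (hμ : 0 ≤ μ) (n : ℕ) : 0 < dFact μ n :=
  lt_of_lt_of_le (by exact_mod_cast Nat.factorial_pos n) (dFact_ge μ hμ n)

lemma summable_Emu (μ : ℝ) (hμ : 0 ≤ μ) (z : ℂ) :
    Summable (fun n : ℕ => z ^ n / (dFact μ n : ℂ)) := by
  apply Summable.of_norm_bounded (g := fun n => ‖z‖ ^ n / n !)
    (Real.summable_pow_div_factorial ‖z‖)
  intro n
  have h1 : (0 : ℝ) < n ! := by exact_mod_cast Nat.factorial_pos n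
  have h2 := dFact_ge μ hμ n
  have h3 := dFact_pos μ hμ n
  rw [norm_div, norm_pow]
  have h4 : ‖((dFact μ n : ℝ) : ℂ)‖ = dFact μ n := by
    rw [Complex.norm_real, Real.norm_eq_abs, abs_of_pos h3]
  rw [h4]
  gcongr

lemma deriv_term_bound (μ : ℝ) (hμ : 0 ≤ μ) (lam : ℂ) (x : ℝ) (n : ℕ) (y : ℝ)
    (hy : |y| ≤ |x| + 1) :
    ‖lam ^ n * ((n : ℂ) * (y : ℂ) ^ (n - 1)) / (dFact μ n : ℂ)‖
      ≤ (2 * ((‖lam‖ + 1) * (|x| + 1))) ^ n / n ! := by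
  have hR1 : (1 : ℝ) ≤ |x| + 1 := by linarith [abs_nonneg x]
  have hd := dFact_pos μ hμ n
  have hnorm : ‖lam ^ n * ((n : ℂ) * (y : ℂ) ^ (n - 1)) / (dFact μ n : ℂ)‖
      = ‖lam‖ ^ n * ((n : ℝ) * |y| ^ (n - 1)) / dFact μ n := by
    rw [norm_div, norm_mul, norm_mul, norm_pow, norm_pow, Complex.norm_natCast,
      Complex.norm_real, Complex.norm_real, Real.norm_eq_abs, Real.norm_eq_abs,
      abs_of_pos hd]
  rw [hnorm]
  have hC : (2 * ((‖lam‖ + 1) * (|x| + 1))) ^ n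
      = 2 ^ n * ((‖lam‖ + 1) ^ n * (|x| + 1) ^ n) := by
    rw [mul_pow, mul_pow]
  rw [hC]
  have hnum : ‖lam‖ ^ n * ((n : ℝ) * |y| ^ (n - 1))
      ≤ 2 ^ n * ((‖lam‖ + 1) ^ n * (|x| + 1) ^ n) := by
    have e1 : ‖lam‖ ^ n ≤ (‖lam‖ + 1) ^ n :=
      pow_le_pow_left₀ (norm_nonneg _) (by linarith) n
    have e2 : (n : ℝ) ≤ 2 ^ n := by
      have := (Nat.lt_two_pow_self (n := n)).le
      exact_mod_cast this
    have e3 : |y| ^ (n - 1) ≤ (|x| + 1) ^ n := by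
      calc |y| ^ (n - 1) ≤ (|x| + 1) ^ (n - 1) :=
            pow_le_pow_left₀ (abs_nonneg y) hy _
        _ ≤ (|x| + 1) ^ n := pow_le_pow_right₀ hR1 (Nat.sub_le n 1)
    calc ‖lam‖ ^ n * ((n : ℝ) * |y| ^ (n - 1))
        ≤ (‖lam‖ + 1) ^ n * (2 ^ n * (|x| + 1) ^ n) := by
          apply mul_le_mul e1 (mul_le_mul e2 e3 (by positivity) (by positivity))
            (by positivity) (by positivity)
      _ = 2 ^ n * ((‖lam‖ + 1) ^ n * (|x| + 1) ^ n) := by ring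
  exact div_le_div₀ (by positivity) hnum (by exact_mod_cast Nat.factorial_pos n)
    (dFact_ge μ hμ n)

lemma hasDerivAt_Emu (μ : ℝ) (hμ : 0 ≤ μ) (lam : ℂ) (x : ℝ) :
    HasDerivAt (fun t : ℝ => Emu μ (lam * t))
      (∑' n : ℕ, lam ^ n * ((n : ℂ) * (x : ℂ) ^ (n - 1)) / (dFact μ n : ℂ)) x := by
  have key : HasDerivAt (fun t : ℝ => ∑' n : ℕ, lam ^ n * (t : ℂ) ^ n / (dFact μ n : ℂ))
      (∑' n : ℕ, lam ^ n * ((n : ℂ) * (x : ℂ) ^ (n - 1)) / (dFact μ n : ℂ)) x := by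
    apply hasDerivAt_tsum_of_isPreconnected
      (Real.summable_pow_div_factorial (2 * ((‖lam‖ + 1) * (|x| + 1))))
      (Metric.isOpen_ball (x := (0 : ℝ)) (ε := |x| + 1))
      ((convex_ball (0 : ℝ) (|x| + 1)).isPreconnected)
      (g' := fun (n : ℕ) (y : ℝ) => lam ^ n * ((n : ℂ) * (y : ℂ) ^ (n - 1)) / (dFact μ n : ℂ))
      (y₀ := x)
    · intro n y _
      exact (((hasDerivAt_pow n ((y : ℝ) : ℂ)).comp_ofReal).const_mul (lam ^ n)).div_const _
    · intro n y hy
      apply deriv_term_bound μ hμ lam x n y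
      have : |y| < |x| + 1 := by simpa [Real.dist_eq] using hy
      linarith
    · simp only [Metric.mem_ball, Real.dist_eq, sub_zero]
      linarith [abs_nonneg x]
    · exact (summable_Emu μ hμ (lam * x)).congr (fun n => by rw [mul_pow])
    · simp only [Metric.mem_ball, Real.dist_eq, sub_zero]
      linarith [abs_nonneg x]
  have heq : (fun t : ℝ => Emu μ (lam * t))
      = fun t : ℝ => ∑' n : ℕ, lam ^ n * (t : ℂ) ^ n / (dFact μ n : ℂ) :=
    funext fun t => tsum_congr fun n => by rw [mul_pow]
  rw [heq]
  exact key

lemma summable_Sterm (μ : ℝ) (hμ : 0 ≤ μ) (lam : ℂ) (x : ℝ) :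
    Summable (fun n : ℕ => lam ^ n * ((n : ℂ) * (x : ℂ) ^ (n - 1)) / (dFact μ n : ℂ)) :=
  Summable.of_norm_bounded (Real.summable_pow_div_factorial _)
    (fun n => deriv_term_bound μ hμ lam x n x (by linarith [abs_nonneg x]))

lemma dunkl_eigen (μ : ℝ) (hμ : 0 ≤ μ) (lam : ℂ) (x : ℝ) (hx : x ≠ 0) :
    dunklC μ (fun t : ℝ => Emu μ (lam * t)) x = lam * Emu μ (lam * x) := by
  have hxC : (x : ℂ) ≠ 0 := Complex.ofReal_ne_zero.2 hx
  set S : ℕ → ℂ := fun n => lam ^ n * ((n : ℂ) * (x : ℂ) ^ (n - 1)) / (dFact μ n : ℂ) with hS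
  set T : ℕ → ℂ := fun n =>
    (μ : ℂ) * ((1 - (-1 : ℂ) ^ n) * (lam ^ n * (x : ℂ) ^ (n - 1))) / (dFact μ n : ℂ) with hT
  set A : ℕ → ℂ := fun n =>
    ((dIdx μ n : ℝ) : ℂ) * (lam ^ n * (x : ℂ) ^ (n - 1)) / (dFact μ n : ℂ) with hA
  have hAST : ∀ n, A n = S n + T n := by
    intro n
    simp only [hA, hS, hT, dIdx]
    push_cast
    ring
  have hAsucc : ∀ n : ℕ, A (n + 1) = lam * ((lam * x) ^ n / (dFact μ n : ℂ)) := by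
    intro n
    have hdpos : (0 : ℝ) < dFact μ n := dFact_pos μ hμ n
    have hIpos : (0 : ℝ) < dIdx μ (n + 1) := by
      have := dIdx_ge μ hμ (n + 1)
      have h0 : (0 : ℝ) < ((n + 1 : ℕ) : ℝ) := by positivity
      linarith
    have hIC : ((dIdx μ (n + 1) : ℝ) : ℂ) ≠ 0 :=
      Complex.ofReal_ne_zero.2 (ne_of_gt hIpos)
    have hdC : ((dFact μ n : ℝ) : ℂ) ≠ 0 := Complex.ofReal_ne_zero.2 (ne_of_gt hdpos)
    simp only [hA]
    rw [show dFact μ (n + 1) = dIdx μ (n + 1) * dFact μ n from rfl]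
    rw [Nat.add_sub_cancel]
    push_cast
    field_simp
    ring
  have hsumsucc : Summable (fun n => A (n + 1)) :=
    (((summable_Emu μ hμ (lam * x)).mul_left lam).congr (fun n => (hAsucc n).symm))
  have hsumA : Summable A := (summable_nat_add_iff 1).mp hsumsucc
  have hsumS : Summable S := summable_Sterm μ hμ lam x
  have hsumT : Summable T :=
    (hsumA.sub hsumS).congr (fun n => by rw [hAST n]; ring)
  have hA0 : A 0 = 0 := by simp [hA, dIdx]
  have htsumA : ∑' n, A n = lam * Emu μ (lam * x) := by
    rw [Summable.tsum_eq_zero_add hsumA, hA0, zero_add, tsum_congr hAsucc, tsum_mul_left]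
    rfl
  have hTrans : (μ : ℂ) * (Emu μ (lam * (x : ℝ)) - Emu μ (lam * ((-x : ℝ) : ℂ))) / (x : ℂ)
      = ∑' n, T n := by
    have h1 : Emu μ (lam * (x : ℝ)) - Emu μ (lam * ((-x : ℝ) : ℂ))
        = ∑' n : ℕ, ((lam * (x : ℝ)) ^ n / (dFact μ n : ℂ)
            - (lam * ((-x : ℝ) : ℂ)) ^ n / (dFact μ n : ℂ)) :=
      (Summable.tsum_sub (summable_Emu μ hμ (lam * (x : ℝ)))
        (summable_Emu μ hμ (lam * ((-x : ℝ) : ℂ)))).symm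
    rw [h1, ← tsum_mul_left, ← tsum_div_const]
    apply tsum_congr
    intro n
    simp only [hT]
    push_cast
    rcases n with _ | k
    · simp
    · rw [Nat.add_sub_cancel]
      field_simp
      ring
  show deriv (fun t : ℝ => Emu μ (lam * t)) x
      + (μ : ℂ) * (Emu μ (lam * (x : ℝ)) - Emu μ (lam * ((-x : ℝ) : ℂ))) / (x : ℂ)
      = lam * Emu μ (lam * x)
  rw [(hasDerivAt_Emu μ hμ lam x).deriv, hTrans, ← htsumA]
  calc (∑' n, S n) + ∑' n, T n = ∑' n, (S n + T n) := (Summable.tsum_add hsumS hsumT).symm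
    _ = ∑' n, A n := tsum_congr (fun n => (hAST n).symm)

lemma iterate_dunkl (μ : ℝ) (hμ : 0 ≤ μ) (lam : ℂ) :
    ∀ (n : ℕ) (x : ℝ), x ≠ 0 →
      (dunklC μ)^[n] (fun t : ℝ => Emu μ (lam * t)) x = lam ^ n * Emu μ (lam * x) := by
  intro n
  induction n with
  | zero => intro x hx; simp
  | succ n ih =>
    intro x hx
    rw [Function.iterate_succ_apply']
    have hev : deriv ((dunklC μ)^[n] (fun t : ℝ => Emu μ (lam * t))) x
        = lam ^ n * (∑' m : ℕ, lam ^ m * ((m : ℂ) * (x : ℂ) ^ (m - 1)) / (dFact μ m : ℂ)) := by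
      have h1 : (dunklC μ)^[n] (fun t : ℝ => Emu μ (lam * t))
          =ᶠ[nhds x] (fun t : ℝ => lam ^ n * Emu μ (lam * t)) := by
        filter_upwards [compl_singleton_mem_nhds hx] with t ht
        exact ih t ht
      rw [h1.deriv_eq]
      exact ((hasDerivAt_Emu μ hμ lam x).const_mul (lam ^ n)).deriv
    have heig := dunkl_eigen μ hμ lam x hx
    rw [dunklC_apply] at heig ⊢
    rw [(hasDerivAt_Emu μ hμ lam x).deriv] at heig
    rw [hev, ih x hx, ih (-x) (neg_ne_zero.mpr hx)]
    push_cast at heig ⊢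
    linear_combination (lam ^ n) * heig

/-- `τ_y E_μ(λx) = E_μ(λx) E_μ(λy)`. -/
theorem tau_Emu (μ : ℝ) (hμ : 0 ≤ μ) (lam : ℂ) (x y : ℝ) (hx : x ≠ 0) :
    tauC μ y (fun t : ℝ => Emu μ (lam * t)) x = Emu μ (lam * x) * Emu μ (lam * y) := by
  unfold tauC
  have h1 : ∀ n : ℕ, ((y : ℂ) ^ n / (dFact μ n : ℂ))
        * ((dunklC μ)^[n] (fun t : ℝ => Emu μ (lam * t)) x)
      = ((lam * (y : ℂ)) ^ n / (dFact μ n : ℂ)) * Emu μ (lam * x) := by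
    intro n
    rw [iterate_dunkl μ hμ lam n x hx, mul_pow]
    ring
  rw [tsum_congr h1, tsum_mul_right,
    show (∑' n : ℕ, (lam * (y : ℂ)) ^ n / (dFact μ n : ℂ)) = Emu μ (lam * y) from rfl,
    mul_comm]
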